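/- For nonnegative integers n, k, r with n ≥ k, one has T_r(n+r, k+r) = ∑_{l=k}^{n} C(n,l) · T(l,k) · r^{n-l}. -/
import Mathlib


/-- The central factorial numbers of the second kind:
`T(n,k) = (1/k!) ∑_{j=0}^{k} (-1)^{k-j} C(k,j) (j - k/2)^n`. -/
noncomputable def centralT (n k : ℕ) : ℝ :=
  (1 / (Nat.factorial k : ℝ)) * ∑ j ∈ Finset.range (k + 1),
    (-1 : ℝ) ^ (k - j) * (Nat.choose k j : ℝ) * ((j : ℝ) - (k : ℝ) / 2) ^ n

/-- The extended `r`-central factorial numbers of the second kind: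
`T_r(n+r,k+r) = (1/k!) ∑_{j=0}^{k} (-1)^{k-j} C(k,j) (j + r - k/2)^n`. -/
noncomputable def rcentralT (r n k : ℕ) : ℝ :=
  (1 / (Nat.factorial k : ℝ)) * ∑ j ∈ Finset.range (k + 1),
    (-1 : ℝ) ^ (k - j) * (Nat.choose k j : ℝ) * ((j : ℝ) + (r : ℝ) - (k : ℝ) / 2) ^ n

open fwdDiff in
lemma fwdDiff_iter_pow_eq_zero : ∀ k l : ℕ, l < k →
    (fwdDiff (1 : ℝ))^[k] (fun t : ℝ => t ^ l) = 0 := by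
  intro k
  induction k with
  | zero => intro l hl; omega
  | succ k IH =>
    intro l hl
    have hΔ : fwdDiff (1 : ℝ) (fun t : ℝ => t ^ l)
        = ∑ m ∈ Finset.range l, ((l.choose m : ℝ)) • (fun t : ℝ => t ^ m) := by
      ext t
      simp only [fwdDiff, Finset.sum_apply, Pi.smul_apply, smul_eq_mul]
      rw [add_pow, Finset.sum_range_succ]
      simp only [Nat.choose_self, Nat.cast_one, mul_one, one_pow, Nat.sub_self, pow_zero,
        add_sub_cancel_right]
      exact Finset.sum_congr rfl fun m _ => by ring
    rw [Function.iterate_succ_apply, hΔ, fwdDiff_iter_finset_sum]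
    refine funext fun t => ?_
    rw [Finset.sum_apply]
    refine Finset.sum_eq_zero fun m hm => ?_
    rw [fwdDiff_iter_const_smul, IH m (lt_of_lt_of_le (Finset.mem_range.mp hm) (by omega))]
    simp

lemma alt_sum_choose_pow_eq_zero (k l : ℕ) (hl : l < k) (x : ℝ) :
    ∑ j ∈ Finset.range (k + 1),
      (-1 : ℝ) ^ (k - j) * (Nat.choose k j : ℝ) * (x + (j : ℝ)) ^ l = 0 := by
  have := fwdDiff_iter_eq_sum_shift (1 : ℝ) (fun t : ℝ => t ^ l) k x
  rw [fwdDiff_iter_pow_eq_zero k l hl] at this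
  simp only [Pi.zero_apply, nsmul_eq_mul, mul_one, zsmul_eq_mul] at this
  rw [this]
  refine Finset.sum_congr rfl fun j _ => ?_
  push_cast
  ring

lemma centralT_eq_zero_of_lt (l k : ℕ) (hl : l < k) : centralT l k = 0 := by
  unfold centralT
  rw [show ∑ j ∈ Finset.range (k + 1),
      (-1 : ℝ) ^ (k - j) * (Nat.choose k j : ℝ) * ((j : ℝ) - (k : ℝ) / 2) ^ l
    = ∑ j ∈ Finset.range (k + 1),
      (-1 : ℝ) ^ (k - j) * (Nat.choose k j : ℝ) * ((-(k : ℝ) / 2) + (j : ℝ)) ^ l from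
    Finset.sum_congr rfl fun j _ => by ring_nf,
    alt_sum_choose_pow_eq_zero k l hl, mul_zero]

/-- For nonnegative integers `n, k, r` with `n ≥ k`, one has
`T_r(n+r, k+r) = ∑_{l=k}^{n} C(n,l) · T(l,k) · r^{n-l}`. -/
theorem rcentralT_eq_sum_centralT (n k r : ℕ) (h : k ≤ n) :
    rcentralT r n k =
      ∑ l ∈ Finset.Icc k n, (Nat.choose n l : ℝ) * centralT l k * (r : ℝ) ^ (n - l) := by
  have expand : rcentralT r n k
      = ∑ l ∈ Finset.range (n + 1), (Nat.choose n l : ℝ) * centralT l k * (r : ℝ) ^ (n - l) := by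
    unfold rcentralT centralT
    have : ∀ j ∈ Finset.range (k + 1),
        (-1 : ℝ) ^ (k - j) * (Nat.choose k j : ℝ) * ((j : ℝ) + (r : ℝ) - (k : ℝ) / 2) ^ n
        = ∑ l ∈ Finset.range (n + 1), (-1 : ℝ) ^ (k - j) * (Nat.choose k j : ℝ) *
            (((j : ℝ) - (k : ℝ) / 2) ^ l * (r : ℝ) ^ (n - l) * (Nat.choose n l : ℝ)) := by
      intro j _
      rw [← Finset.mul_sum, show ((j : ℝ) + (r : ℝ) - (k : ℝ) / 2)
        = ((j : ℝ) - (k : ℝ) / 2) + (r : ℝ) by ring, add_pow]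
    rw [Finset.sum_congr rfl this, Finset.sum_comm, Finset.mul_sum]
    refine Finset.sum_congr rfl fun l _ => ?_
    simp only [Finset.mul_sum, Finset.sum_mul]
    exact Finset.sum_congr rfl fun j _ => by ring
  rw [expand, Finset.range_eq_Ico,
    ← Finset.sum_Ico_consecutive _ (Nat.zero_le k) (by omega : k ≤ n + 1),
    show Finset.Icc k n = Finset.Ico k (n + 1) from rfl]
  have h0 : ∑ l ∈ Finset.Ico 0 k, (Nat.choose n l : ℝ) * centralT l k * (r : ℝ) ^ (n - l) = 0 :=
    Finset.sum_eq_zero fun l hl => by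
      rw [centralT_eq_zero_of_lt l k (Finset.mem_Ico.mp hl).2, mul_zero, zero_mul]
  rw [h0, zero_add]
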